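/- For n ≥ 5, every generating set G of IOF_n^par contains, for each i ∈ {1,...,n−4}, a non-partial-identity element γ_i with domain J_i = {1,...,i} ∪ {i+4,...,n} and a non-partial-identity element β_i with image J_i; moreover all these 2(n−4) elements γ_1,...,γ_{n−4}, β_1,...,β_{n−4} are pairwise distinct. -/
import Mathlib


/-- A partial injection on `{1,...,n}`, represented by its graph. -/
structure PInj (n : ℕ) where
  R : ℕ → ℕ → Prop
  memL : ∀ ⦃x y⦄, R x y → x ∈ Set.Icc 1 n
  memR : ∀ ⦃x y⦄, R x y → y ∈ Set.Icc 1 n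
  func : ∀ ⦃x y y'⦄, R x y → R x y' → y = y'
  inj : ∀ ⦃x x' y⦄, R x y → R x' y → x = x'

namespace PInj

variable {n : ℕ}

@[ext] theorem ext {a b : PInj n} (h : ∀ x y, a.R x y ↔ b.R x y) : a = b := by
  cases a; cases b
  simp only [mk.injEq]
  funext x y
  exact propext (h x y)

instance : Mul (PInj n) :=
  ⟨fun a b =>
    { R := fun x z => ∃ y, a.R x y ∧ b.R y z
      memL := by rintro x z ⟨y, h1, _⟩; exact a.memL h1
      memR := by rintro x z ⟨y, _, h2⟩; exact b.memR h2
      func := by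
        rintro x z z' ⟨y, h1, h2⟩ ⟨y', h1', h2'⟩
        obtain rfl := a.func h1 h1'
        exact b.func h2 h2'
      inj := by
        rintro x x' z ⟨y, h1, h2⟩ ⟨y', h1', h2'⟩
        obtain rfl := b.inj h2 h2'
        exact a.inj h1 h1' }⟩

instance : One (PInj n) :=
  ⟨{ R := fun x y => x ∈ Set.Icc 1 n ∧ y = x
     memL := by rintro x y ⟨h, rfl⟩; exact h
     memR := by rintro x y ⟨h, rfl⟩; exact h
     func := by rintro x y y' ⟨_, rfl⟩ ⟨_, rfl⟩; rfl
     inj := by rintro x x' y ⟨_, rfl⟩ ⟨_, h⟩; exact h }⟩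

instance : Monoid (PInj n) where
  mul_assoc a b c := by
    ext x y
    constructor
    · rintro ⟨z, ⟨w, h1, h2⟩, h3⟩; exact ⟨w, h1, z, h2, h3⟩
    · rintro ⟨w, h1, z, h2, h3⟩; exact ⟨z, ⟨w, h1, h2⟩, h3⟩
  one_mul a := by
    ext x y
    constructor
    · rintro ⟨z, ⟨_, rfl⟩, h⟩; exact h
    · intro h; exact ⟨x, ⟨a.memL h, rfl⟩, h⟩
  mul_one a := by
    ext x y
    constructor
    · rintro ⟨z, h, _, rfl⟩; exact h
    · intro h; exact ⟨y, h, a.memR h, rfl⟩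

/-- The inverse of a partial injection. -/
def inv (a : PInj n) : PInj n where
  R := fun x y => a.R y x
  memL := by intro x y h; exact a.memR h
  memR := by intro x y h; exact a.memL h
  func := by intro x y y' h h'; exact a.inj h h'
  inj := by intro x x' y h h'; exact a.func h h'

/-- The domain of a partial injection. -/
def dom (a : PInj n) : Set ℕ := {x | ∃ y, a.R x y}

/-- The image of a partial injection. -/
def im (a : PInj n) : Set ℕ := {y | ∃ x, a.R x y}

end PInj

/-- The strict fence (zig-zag) order on `{1,...,n}`: `x ≺ y` iff `x` is odd and
`x`, `y` are adjacent.  It is generated by `i ≺ i+1` for odd `i` and `i+1 ≺ i`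
for even `i`. -/
def FenceLt (x y : ℕ) : Prop := Odd x ∧ (y = x + 1 ∨ x = y + 1)

/-- Membership in `IOF_n^par`: order-preserving, parity-preserving,
fence-preserving, and with fence-preserving inverse. -/
def IsIOF {n : ℕ} (a : PInj n) : Prop :=
  (∀ ⦃x y x' y'⦄, a.R x y → a.R x' y' → x < x' → y < y') ∧
  (∀ ⦃x y⦄, a.R x y → x % 2 = y % 2) ∧
  (∀ ⦃x y x' y'⦄, a.R x y → a.R x' y' → FenceLt x x' → FenceLt y y') ∧
  (∀ ⦃x y x' y'⦄, a.R x y → a.R x' y' → FenceLt y y' → FenceLt x x')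

/-- A partial identity: every point of the domain is fixed. -/
def IsPartialId {n : ℕ} (a : PInj n) : Prop := ∀ ⦃x y⦄, a.R x y → y = x

/-- The partial identity `v_i` with domain `{1,...,n} \ {i}`. -/
def vMap (n i : ℕ) : PInj n where
  R := fun x y => x ∈ Set.Icc 1 n ∧ x ≠ i ∧ y = x
  memL := by rintro x y ⟨h, _, rfl⟩; exact h
  memR := by rintro x y ⟨h, _, rfl⟩; exact h
  func := by rintro x y y' ⟨_, _, rfl⟩ ⟨_, _, rfl⟩; rfl
  inj := by rintro x x' y ⟨_, _, rfl⟩ ⟨_, _, h⟩; exact h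

/-- The map `u_i` with domain `{1,...,i} ∪ {i+4,...,n}`, sending `ρ ↦ ρ+2` for
`ρ ≤ i` and `ρ ↦ ρ` for `ρ ≥ i+4`. -/
def uMap (n i : ℕ) : PInj n where
  R := fun x y => x ∈ Set.Icc 1 n ∧ y ∈ Set.Icc 1 n ∧
        ((x ≤ i ∧ y = x + 2) ∨ (i + 4 ≤ x ∧ y = x))
  memL := by rintro x y ⟨h, _, _⟩; exact h
  memR := by rintro x y ⟨_, h, _⟩; exact h
  func := by
    rintro x y y' ⟨_, _, (⟨hx, rfl⟩ | ⟨hx, rfl⟩)⟩ ⟨_, _, (⟨hx', rfl⟩ | ⟨hx', rfl⟩)⟩ <;> omega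
  inj := by
    rintro x x' y ⟨_, _, (⟨hx, rfl⟩ | ⟨hx, rfl⟩)⟩ ⟨_, _, (⟨hx', h'⟩ | ⟨hx', h'⟩)⟩ <;> omega

/-- The set `J_i = {1,...,i} ∪ {i+4,...,n}`. -/
def Jset (n i : ℕ) : Set ℕ := {x | (1 ≤ x ∧ x ≤ i) ∨ (i + 4 ≤ x ∧ x ≤ n)}

/-- `G` is a generating set of the monoid `IOF_n^par`: it consists of elements of
`IOF_n^par` and every element of `IOF_n^par` is a finite product of elements of `G`. -/
def Generates (n : ℕ) (G : Set (PInj n)) : Prop :=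
  (∀ g ∈ G, IsIOF g) ∧
  ∀ a : PInj n, IsIOF a →
    ∃ l : List (PInj n), (∀ b ∈ l, b ∈ G) ∧ l.prod = a

section Aux

variable {n : ℕ}

theorem iof_step {a : PInj n} (ha : IsIOF a) {x y y' : ℕ} (h : a.R x y)
    (h' : a.R (x + 1) y') : y' = y + 1 := by
  have hlt : y < y' := ha.1 h h' (by omega)
  rcases Nat.even_or_odd x with he | ho
  · have := ha.2.2.1 h' h ⟨he.add_one, Or.inr rfl⟩
    rcases this.2 with h1 | h1 <;> omega
  · have := ha.2.2.1 h h' ⟨ho, Or.inl rfl⟩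
    rcases this.2 with h1 | h1 <;> omega

theorem iof_run {a : PInj n} (ha : IsIOF a) {p q : ℕ} (h : a.R p q) (k : ℕ)
    (hd : ∀ t, p < t → t ≤ p + k → ∃ y, a.R t y) : a.R (p + k) (q + k) := by
  induction k with
  | zero => simpa using h
  | succ k ih =>
    have hk := ih (fun t ht ht' => hd t ht (by omega))
    obtain ⟨y, hy⟩ := hd (p + k + 1) (by omega) (by omega)
    have := iof_step ha hk hy
    subst this
    exact hy

theorem iof_nonadj {a : PInj n} (ha : IsIOF a) {x y x' y' : ℕ} (h : a.R x y)
    (h' : a.R x' y') (hx : x + 2 ≤ x') (hy : y' = y + 1) : False := by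
  subst hy
  rcases Nat.even_or_odd y with he | ho
  · have := ha.2.2.2 h' h ⟨he.add_one, Or.inr rfl⟩
    rcases this.2 with h1 | h1 <;> omega
  · have := ha.2.2.2 h h' ⟨ho, Or.inl rfl⟩
    rcases this.2 with h1 | h1 <;> omega

/-- If `a.R 1 1` and `a.R (i+4) (i+4)` and `J_i ⊆ dom a`, then `a` is a
partial identity. -/
theorem fixed_of_ends {a : PInj n} (ha : IsIOF a) {i : ℕ} (hi1 : 1 ≤ i)
    (hin : i + 4 ≤ n) (hdom : ∀ x ∈ Jset n i, ∃ y, a.R x y)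
    (h1 : a.R 1 1) (h4 : a.R (i + 4) (i + 4)) : IsPartialId a := by
  have hleft : ∀ t, 1 ≤ t → t ≤ i → a.R t t := by
    intro t ht1 ht2
    have := iof_run ha h1 (t - 1)
      (fun s hs hs' => hdom s (Or.inl ⟨by omega, by omega⟩))
    have e : 1 + (t - 1) = t := by omega
    rwa [e] at this
  have hright : ∀ t, i + 4 ≤ t → t ≤ n → a.R t t := by
    intro t ht1 ht2
    have := iof_run ha h4 (t - (i + 4))
      (fun s hs hs' => hdom s (Or.inr ⟨by omega, by omega⟩))
    have e : i + 4 + (t - (i + 4)) = t := by omega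
    rwa [e] at this
  intro x y hxy
  have hx := a.memL hxy
  rw [Set.mem_Icc] at hx
  rcases le_or_gt x i with hxi | hxi
  · exact a.func hxy (hleft x hx.1 hxi)
  rcases le_or_gt (i + 4) x with hx4 | hx4
  · exact a.func hxy (hright x hx4 hx.2)
  have hii : a.R i i := hleft i hi1 le_rfl
  have hcase : x = i + 1 ∨ x = i + 2 ∨ x = i + 3 := by omega
  rcases hcase with rfl | rfl | rfl
  · exact iof_step ha hii hxy
  · have hlt1 : i < y := ha.1 hii hxy (by omega)
    have hlt2 : y < i + 4 := ha.1 hxy h4 (by omega)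
    have hp := ha.2.1 hxy
    omega
  · have h4' : a.R (i + 3 + 1) (i + 4) := by
      rw [show i + 3 + 1 = i + 4 by omega]; exact h4
    have := iof_step ha hxy h4'
    omega

/-- A non-partial-identity element of IOF whose domain contains `J_i` together
with an interior point is impossible: such a map must be a partial identity. -/
theorem pid_of_extra {a : PInj n} (ha : IsIOF a) {i z : ℕ} (hi1 : 1 ≤ i)
    (hin : i + 4 ≤ n) (hdom : ∀ x ∈ Jset n i, ∃ y, a.R x y)
    (hz1 : i < z) (hz2 : z < i + 4) (hz : ∃ y, a.R z y) : IsPartialId a := by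
  obtain ⟨y₁, h1R⟩ := hdom 1 (Or.inl ⟨le_rfl, hi1⟩)
  obtain ⟨w₀, h4R⟩ := hdom (i + 4) (Or.inr ⟨le_rfl, hin⟩)
  have hy₁ := a.memR h1R
  rw [Set.mem_Icc] at hy₁
  have hp1 : 1 % 2 = y₁ % 2 := ha.2.1 h1R
  have hp4 : (i + 4) % 2 = w₀ % 2 := ha.2.1 h4R
  have hAi : a.R i (y₁ + (i - 1)) := by
    have := iof_run ha h1R (i - 1)
      (fun s hs hs' => hdom s (Or.inl ⟨by omega, by omega⟩))
    have e : 1 + (i - 1) = i := by omega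
    rwa [e] at this
  have hAn : a.R n (w₀ + (n - (i + 4))) := by
    have := iof_run ha h4R (n - (i + 4))
      (fun s hs hs' => hdom s (Or.inr ⟨by omega, by omega⟩))
    have e : i + 4 + (n - (i + 4)) = n := by omega
    rwa [e] at this
  have hw₀ : w₀ + (n - (i + 4)) ≤ n := ((Set.mem_Icc.mp (a.memR hAn)).2)
  have hw₀' : w₀ ≤ i + 4 := by omega
  obtain ⟨yz, hzR⟩ := hz
  have key : y₁ = 1 ∧ w₀ = i + 4 := by
    have hcase : z = i + 1 ∨ z = i + 2 ∨ z = i + 3 := by omega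
    rcases hcase with rfl | rfl | rfl
    · have hstep : yz = y₁ + (i - 1) + 1 := iof_step ha hAi hzR
      have hord : yz < w₀ := ha.1 hzR h4R (by omega)
      have hne : w₀ ≠ yz + 1 := fun he => iof_nonadj ha hzR h4R (by omega) he
      omega
    · have hord1 : y₁ + (i - 1) < yz := ha.1 hAi hzR (by omega)
      have hord2 : yz < w₀ := ha.1 hzR h4R (by omega)
      have hpz : (i + 2) % 2 = yz % 2 := ha.2.1 hzR
      omega
    · have h4R' : a.R (i + 3 + 1) w₀ := by
        rw [show i + 3 + 1 = i + 4 by omega]; exact h4R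
      have hstep : w₀ = yz + 1 := iof_step ha hzR h4R'
      have hord1 : y₁ + (i - 1) < yz := ha.1 hAi hzR (by omega)
      have hne : yz ≠ y₁ + (i - 1) + 1 := fun he => iof_nonadj ha hAi hzR (by omega) he
      omega
  obtain ⟨e1, e2⟩ := key
  rw [e1] at h1R
  rw [e2] at h4R
  exact fixed_of_ends ha hi1 hin hdom h1R h4R

/-- A non-partial-identity element of IOF whose domain contains `J_i` has
domain exactly `J_i`. -/
theorem dom_eq_J {a : PInj n} (ha : IsIOF a) (hnp : ¬ IsPartialId a) {i : ℕ}
    (hi1 : 1 ≤ i) (hin : i + 4 ≤ n) (hdom : Jset n i ⊆ a.dom) :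
    a.dom = Jset n i := by
  refine Set.Subset.antisymm ?_ hdom
  rintro x ⟨y, hxy⟩
  have hx := a.memL hxy
  rw [Set.mem_Icc] at hx
  by_contra hxJ
  have hx1 : i < x := by
    by_contra h
    exact hxJ (Or.inl ⟨hx.1, by omega⟩)
  have hx2 : x < i + 4 := by
    by_contra h
    exact hxJ (Or.inr ⟨by omega, hx.2⟩)
  exact hnp (pid_of_extra ha hi1 hin (fun t ht => hdom ht) hx1 hx2 ⟨y, hxy⟩)

/-- A non-partial-identity element of IOF with domain `J_i` cannot have both
`1` and `n` in its image. -/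
theorem pid_of_im_ends {a : PInj n} (ha : IsIOF a) {i : ℕ} (hi1 : 1 ≤ i)
    (hin : i + 4 ≤ n) (hdomEq : a.dom = Jset n i)
    (h1 : 1 ∈ a.im) (hn : n ∈ a.im) : IsPartialId a := by
  have hdom : ∀ x ∈ Jset n i, ∃ y, a.R x y := by
    intro x hx
    rw [← hdomEq] at hx
    exact hx
  obtain ⟨y₁, h1R⟩ := hdom 1 (Or.inl ⟨le_rfl, hi1⟩)
  obtain ⟨w₀, h4R⟩ := hdom (i + 4) (Or.inr ⟨le_rfl, hin⟩)
  have hy₁ := a.memR h1R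
  rw [Set.mem_Icc] at hy₁
  have hAi : ∀ t, 1 ≤ t → t ≤ i → a.R t (y₁ + (t - 1)) := by
    intro t ht1 ht2
    have := iof_run ha h1R (t - 1)
      (fun s hs hs' => hdom s (Or.inl ⟨by omega, by omega⟩))
    have e : 1 + (t - 1) = t := by omega
    rwa [e] at this
  have hAr : ∀ t, i + 4 ≤ t → t ≤ n → a.R t (w₀ + (t - (i + 4))) := by
    intro t ht1 ht2
    have := iof_run ha h4R (t - (i + 4))
      (fun s hs hs' => hdom s (Or.inr ⟨by omega, by omega⟩))
    have e : i + 4 + (t - (i + 4)) = t := by omega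
    rwa [e] at this
  have hw₀ : w₀ + (n - (i + 4)) ≤ n :=
    (Set.mem_Icc.mp (a.memR (hAr n (by omega) le_rfl))).2
  obtain ⟨x, hx1⟩ := h1
  have hxJ : x ∈ Jset n i := by
    rw [← hdomEq]; exact ⟨1, hx1⟩
  have hy1 : y₁ = 1 := by
    rcases hxJ with ⟨hxa, hxb⟩ | ⟨hxa, hxb⟩
    · have := a.func hx1 (hAi x hxa hxb)
      omega
    · have := ha.1 (hAi i hi1 le_rfl) hx1 (by omega)
      omega
  obtain ⟨x', hxn⟩ := hn
  have hxJ' : x' ∈ Jset n i := by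
    rw [← hdomEq]; exact ⟨n, hxn⟩
  have hwn : w₀ = i + 4 := by
    rcases hxJ' with ⟨hxa, hxb⟩ | ⟨hxa, hxb⟩
    · have := a.func hxn (hAi x' hxa hxb)
      omega
    · have hx'n := (Set.mem_Icc.mp (a.memL hxn)).2
      have := a.func hxn (hAr x' hxa hx'n)
      omega
  rw [hy1] at h1R
  rw [hwn] at h4R
  exact fixed_of_ends ha hi1 hin hdom h1R h4R

theorem isIOF_inv {a : PInj n} (ha : IsIOF a) : IsIOF a.inv := by
  obtain ⟨ho, hp, hf, hfi⟩ := ha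
  refine ⟨?_, fun x y h => (hp h).symm, fun x y x' y' h h' => hfi h h',
    fun x y x' y' h h' => hf h h'⟩
  intro x y x' y' h h' hlt
  rcases lt_trichotomy y y' with h1 | h1 | h1
  · exact h1
  · subst h1
    exact absurd (a.func h h') (by omega)
  · exact absurd (ho h' h h1) (by omega)

theorem pid_one : IsPartialId (1 : PInj n) := fun _ _ h => h.2

theorem pid_mul {a b : PInj n} (hpa : IsPartialId a) (hpb : IsPartialId b) :
    IsPartialId (a * b) := by
  rintro x z ⟨y, h1, h2⟩
  have := hpa h1
  have := hpb h2
  omega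

theorem pid_prod {l : List (PInj n)} (h : ∀ b ∈ l, IsPartialId b) :
    IsPartialId l.prod := by
  induction l with
  | nil => exact pid_one
  | cons a l ih =>
    rw [List.prod_cons]
    exact pid_mul (h a (by simp)) (ih fun b hb => h b (by simp [hb]))

theorem pid_inv {a : PInj n} (h : IsPartialId a.inv) : IsPartialId a :=
  fun x y hxy => (h (show a.inv.R y x from hxy)).symm

theorem dom_mul_subset (a b : PInj n) : (a * b).dom ⊆ a.dom := by
  rintro x ⟨z, y, h1, h2⟩
  exact ⟨y, h1⟩

theorem dom_mul_pid {a b : PInj n} (hpa : IsPartialId a) :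
    (a * b).dom ⊆ b.dom := by
  rintro x ⟨z, y, h1, h2⟩
  obtain rfl := hpa h1
  exact ⟨z, h2⟩

theorem im_mul_subset (a b : PInj n) : (a * b).im ⊆ b.im := by
  rintro z ⟨x, y, h1, h2⟩
  exact ⟨y, h2⟩

theorem im_mul_pid {a b : PInj n} (hpb : IsPartialId b) :
    (a * b).im ⊆ a.im := by
  rintro z ⟨x, y, h1, h2⟩
  obtain rfl := hpb h2
  exact ⟨x, h1⟩

theorem exists_first_nonpid {l : List (PInj n)} (h : ∃ g ∈ l, ¬ IsPartialId g) :
    ∃ l₁ g l₂, l = l₁ ++ g :: l₂ ∧ (∀ b ∈ l₁, IsPartialId b) ∧ ¬ IsPartialId g := by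
  induction l with
  | nil => simp at h
  | cons a l ih =>
    by_cases hpa : IsPartialId a
    · obtain ⟨g, hg, hgn⟩ := h
      rcases List.mem_cons.mp hg with rfl | hgl
      · exact absurd hpa hgn
      · obtain ⟨l₁, g', l₂, he, hh1, hh2⟩ := ih ⟨g, hgl, hgn⟩
        refine ⟨a :: l₁, g', l₂, by rw [he]; rfl, ?_, hh2⟩
        intro b hb
        rcases List.mem_cons.mp hb with rfl | hb'
        · exact hpa
        · exact hh1 b hb'
    · exact ⟨[], a, l, rfl, by simp, hpa⟩

theorem exists_last_nonpid {l : List (PInj n)} (h : ∃ g ∈ l, ¬ IsPartialId g) :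
    ∃ l₁ g l₂, l = l₁ ++ g :: l₂ ∧ (∀ b ∈ l₂, IsPartialId b) ∧ ¬ IsPartialId g := by
  induction l with
  | nil => simp at h
  | cons a l ih =>
    by_cases hl : ∃ g ∈ l, ¬ IsPartialId g
    · obtain ⟨l₁, g', l₂, he, hh1, hh2⟩ := ih hl
      exact ⟨a :: l₁, g', l₂, by rw [he]; rfl, hh1, hh2⟩
    · push_neg at hl
      obtain ⟨g, hg, hgn⟩ := h
      rcases List.mem_cons.mp hg with rfl | hgl
      · exact ⟨[], g, l, rfl, hl, hgn⟩
      · exact absurd (hl g hgl) hgn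

theorem exists_nonpid_of_prod {l : List (PInj n)} (h : ¬ IsPartialId l.prod) :
    ∃ g ∈ l, ¬ IsPartialId g := by
  by_contra hc
  push_neg at hc
  exact h (pid_prod hc)

theorem isIOF_uMap {i : ℕ} (hi1 : 1 ≤ i) (hin : i + 4 ≤ n) :
    IsIOF (uMap n i) := by
  refine ⟨?_, ?_, ?_, ?_⟩
  · rintro x y x' y' ⟨hx, hy, h⟩ ⟨hx', hy', h'⟩ hlt
    rw [Set.mem_Icc] at hx hy hx' hy'
    rcases h with ⟨h1, rfl⟩ | ⟨h1, rfl⟩ <;> rcases h' with ⟨h2, rfl⟩ | ⟨h2, rfl⟩ <;> omega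
  · rintro x y ⟨hx, hy, (⟨h1, rfl⟩ | ⟨h1, rfl⟩)⟩ <;> omega
  · rintro x y x' y' ⟨hx, hy, h⟩ ⟨hx', hy', h'⟩ ⟨hodd, hadj⟩
    rw [Set.mem_Icc] at hx hy hx' hy'
    rw [Nat.odd_iff] at hodd
    rcases h with ⟨h1, rfl⟩ | ⟨h1, rfl⟩ <;> rcases h' with ⟨h2, rfl⟩ | ⟨h2, rfl⟩ <;>
      exact ⟨Nat.odd_iff.mpr (by omega), by omega⟩
  · rintro x y x' y' ⟨hx, hy, h⟩ ⟨hx', hy', h'⟩ ⟨hodd, hadj⟩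
    rw [Set.mem_Icc] at hx hy hx' hy'
    rw [Nat.odd_iff] at hodd
    rcases h with ⟨h1, rfl⟩ | ⟨h1, rfl⟩ <;> rcases h' with ⟨h2, rfl⟩ | ⟨h2, rfl⟩ <;>
      exact ⟨Nat.odd_iff.mpr (by omega), by omega⟩

theorem uMap_R13 {i : ℕ} (hi1 : 1 ≤ i) (hin : i + 4 ≤ n) :
    (uMap n i).R 1 3 :=
  ⟨Set.mem_Icc.mpr ⟨le_rfl, by omega⟩, Set.mem_Icc.mpr ⟨by omega, by omega⟩,
    Or.inl ⟨hi1, rfl⟩⟩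

theorem uMap_not_pid {i : ℕ} (hi1 : 1 ≤ i) (hin : i + 4 ≤ n) :
    ¬ IsPartialId (uMap n i) := fun h => by
  have := h (uMap_R13 hi1 hin)
  omega

theorem uMap_inv_not_pid {i : ℕ} (hi1 : 1 ≤ i) (hin : i + 4 ≤ n) :
    ¬ IsPartialId (uMap n i).inv := fun h => by
  have := h (show (uMap n i).inv.R 3 1 from uMap_R13 hi1 hin)
  omega

theorem uMap_dom {i : ℕ} (hi1 : 1 ≤ i) (hin : i + 4 ≤ n) :
    Jset n i ⊆ (uMap n i).dom := by
  rintro x (⟨hx1, hx2⟩ | ⟨hx1, hx2⟩)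
  · exact ⟨x + 2, Set.mem_Icc.mpr ⟨by omega, by omega⟩,
      Set.mem_Icc.mpr ⟨by omega, by omega⟩, Or.inl ⟨hx2, rfl⟩⟩
  · exact ⟨x, Set.mem_Icc.mpr ⟨by omega, by omega⟩,
      Set.mem_Icc.mpr ⟨by omega, by omega⟩, Or.inr ⟨hx1, rfl⟩⟩

theorem Jset_inj {i j : ℕ} (hn : 5 ≤ n) (hi1 : 1 ≤ i) (hi2 : i ≤ n - 4)
    (hj1 : 1 ≤ j) (hj2 : j ≤ n - 4) (h : Jset n i = Jset n j) : i = j := by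
  have h1 := Set.ext_iff.mp h (i + 1)
  have h2 := Set.ext_iff.mp h (j + 1)
  simp only [Jset, Set.mem_setOf_eq] at h1 h2
  omega

theorem gamma_exists (hn : 5 ≤ n) {G : Set (PInj n)} (hG : Generates n G) {i : ℕ}
    (hi1 : 1 ≤ i) (hi2 : i ≤ n - 4) :
    ∃ g, g ∈ G ∧ ¬ IsPartialId g ∧ g.dom = Jset n i := by
  have hin : i + 4 ≤ n := by omega
  obtain ⟨l, hlG, hlp⟩ := hG.2 _ (isIOF_uMap hi1 hin)
  have hnp : ¬ IsPartialId l.prod := by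
    rw [hlp]; exact uMap_not_pid hi1 hin
  obtain ⟨l₁, g, l₂, rfl, hpid, hg⟩ := exists_first_nonpid (exists_nonpid_of_prod hnp)
  refine ⟨g, hlG g (by simp), hg, ?_⟩
  refine dom_eq_J (hG.1 g (hlG g (by simp))) hg hi1 hin ?_
  intro x hx
  have hx1 : x ∈ (l₁ ++ g :: l₂).prod.dom := by
    rw [hlp]
    exact uMap_dom hi1 hin hx
  rw [List.prod_append, List.prod_cons] at hx1
  exact dom_mul_subset _ _ (dom_mul_pid (pid_prod hpid) hx1)

theorem beta_exists (hn : 5 ≤ n) {G : Set (PInj n)} (hG : Generates n G) {i : ℕ}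
    (hi1 : 1 ≤ i) (hi2 : i ≤ n - 4) :
    ∃ g, g ∈ G ∧ ¬ IsPartialId g ∧ g.im = Jset n i := by
  have hin : i + 4 ≤ n := by omega
  obtain ⟨l, hlG, hlp⟩ := hG.2 _ (isIOF_inv (isIOF_uMap hi1 hin))
  have hnp : ¬ IsPartialId l.prod := by
    rw [hlp]; exact uMap_inv_not_pid hi1 hin
  obtain ⟨l₁, g, l₂, rfl, hpid, hg⟩ := exists_last_nonpid (exists_nonpid_of_prod hnp)
  refine ⟨g, hlG g (by simp), hg, ?_⟩
  have him : Jset n i ⊆ g.im := by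
    intro x hx
    have hx1 : x ∈ (l₁ ++ g :: l₂).prod.im := by
      rw [hlp]
      exact uMap_dom hi1 hin hx
    rw [List.prod_append, List.prod_cons] at hx1
    exact im_mul_pid (pid_prod hpid) (im_mul_subset _ _ hx1)
  have hginv : ¬ IsPartialId g.inv := fun h => hg (pid_inv h)
  have := dom_eq_J (isIOF_inv (hG.1 g (hlG g (by simp)))) hginv hi1 hin
    (show Jset n i ⊆ g.inv.dom from him)
  exact this

end Aux

/-- every generating set of `IOF_n^par` (n ≥ 5) contains, for each
`i ∈ {1,...,n-4}`, a non-partial-identity `γ_i` with domain `J_i` and a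
non-partial-identity `β_i` with image `J_i`, all `2(n-4)` of them pairwise distinct. -/
theorem stmt12 (n : ℕ) (hn : 5 ≤ n) (G : Set (PInj n)) (hG : Generates n G) :
    ∃ γ β : ℕ → PInj n,
      (∀ i ∈ Set.Icc 1 (n - 4),
        γ i ∈ G ∧ ¬ IsPartialId (γ i) ∧ PInj.dom (γ i) = Jset n i) ∧
      (∀ i ∈ Set.Icc 1 (n - 4),
        β i ∈ G ∧ ¬ IsPartialId (β i) ∧ PInj.im (β i) = Jset n i) ∧
      (∀ i ∈ Set.Icc 1 (n - 4), ∀ j ∈ Set.Icc 1 (n - 4), i ≠ j → γ i ≠ γ j) ∧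
      (∀ i ∈ Set.Icc 1 (n - 4), ∀ j ∈ Set.Icc 1 (n - 4), i ≠ j → β i ≠ β j) ∧
      (∀ i ∈ Set.Icc 1 (n - 4), ∀ j ∈ Set.Icc 1 (n - 4), γ i ≠ β j) := by
  have hiff : ∀ i, i ∈ Set.Icc 1 (n - 4) → 1 ≤ i ∧ i ≤ n - 4 := by
    intro i hi
    rwa [Set.mem_Icc] at hi
  have Hγ : ∀ i ∈ Set.Icc 1 (n - 4),
      ∃ g, g ∈ G ∧ ¬ IsPartialId g ∧ PInj.dom g = Jset n i := by
    intro i hi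
    obtain ⟨h1, h2⟩ := hiff i hi
    exact gamma_exists hn hG h1 h2
  have Hβ : ∀ i ∈ Set.Icc 1 (n - 4),
      ∃ g, g ∈ G ∧ ¬ IsPartialId g ∧ PInj.im g = Jset n i := by
    intro i hi
    obtain ⟨h1, h2⟩ := hiff i hi
    exact beta_exists hn hG h1 h2
  choose! γ hγG hγP hγD using Hγ
  choose! β hβG hβP hβD using Hβ
  refine ⟨γ, β, fun i hi => ⟨hγG i hi, hγP i hi, hγD i hi⟩,
    fun i hi => ⟨hβG i hi, hβP i hi, hβD i hi⟩, ?_, ?_, ?_⟩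
  · intro i hi j hj hij heq
    apply hij
    refine Jset_inj hn (hiff i hi).1 (hiff i hi).2 (hiff j hj).1 (hiff j hj).2 ?_
    rw [← hγD i hi, ← hγD j hj, heq]
  · intro i hi j hj hij heq
    apply hij
    refine Jset_inj hn (hiff i hi).1 (hiff i hi).2 (hiff j hj).1 (hiff j hj).2 ?_
    rw [← hβD i hi, ← hβD j hj, heq]
  · intro i hi j hj heq
    obtain ⟨hi1, hi2⟩ := hiff i hi
    obtain ⟨hj1, hj2⟩ := hiff j hj
    have hin : i + 4 ≤ n := by omega
    have ha : IsIOF (γ i) := hG.1 _ (hγG i hi)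
    have himJ : PInj.im (γ i) = Jset n j := by rw [heq]; exact hβD j hj
    have h1 : 1 ∈ PInj.im (γ i) := by
      rw [himJ]; exact Or.inl ⟨le_rfl, hj1⟩
    have hnmem : n ∈ PInj.im (γ i) := by
      rw [himJ]; exact Or.inr ⟨by omega, le_rfl⟩
    exact hγP i hi (pid_of_im_ends ha hi1 hin (hγD i hi) h1 hnmem)
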